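/- If X ⊆ 2^ω is contained in a μ-measure-zero set and |X| < 𝔟, then X can be covered by a μ-measure-zero set of type F_σ: there exists a countable union of closed sets G ⊆ 2^ω with μ(G) = 0 and X ⊆ G. -/

import Mathlib

open MeasureTheory Set Filter Cardinal

/-- `μ` is the uniform product ("fair coin") probability measure on Cantor space `2^ω`,
characterized by its values on cylinders. -/
def IsFairCoin (μ : Measure (ℕ → Bool)) : Prop :=
  ∀ (s : Finset ℕ) (σ : ℕ → Bool),
    μ {x : ℕ → Bool | ∀ i ∈ s, x i = σ i} = (1 / 2 : ENNReal) ^ s.card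

/-- The σ-ideal of μ-null sets. -/
def nullIdeal (μ : Measure (ℕ → Bool)) : Set (Set (ℕ → Bool)) := {A | μ A = 0}

/-- The σ-ideal of meager subsets of Cantor space. -/
def meagerIdeal : Set (Set (ℕ → Bool)) := {A | IsMeagre A}

/-- The σ-ideal generated by closed measure zero sets. -/
def closedNullIdeal (μ : Measure (ℕ → Bool)) : Set (Set (ℕ → Bool)) :=
  {A | ∃ F : ℕ → Set (ℕ → Bool), (∀ n, IsClosed (F n) ∧ μ (F n) = 0) ∧ A ⊆ ⋃ n, F n}

/-- `add(I, J)`: the least cardinality of a subfamily of `I` whose union is not in `J`. -/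
noncomputable def addIJ (I J : Set (Set (ℕ → Bool))) : Cardinal :=
  sInf {c : Cardinal | ∃ A : Set (Set (ℕ → Bool)), A ⊆ I ∧ ⋃₀ A ∉ J ∧ c = #A}

/-- `cov(J)`: the least cardinality of a subfamily of `J` covering the whole space. -/
noncomputable def covI (J : Set (Set (ℕ → Bool))) : Cardinal :=
  sInf {c : Cardinal | ∃ A : Set (Set (ℕ → Bool)), A ⊆ J ∧ ⋃₀ A = Set.univ ∧ c = #A}

/-- `unif(J)`: the least cardinality of a set of reals not in `J`. -/
noncomputable def unifI (J : Set (Set (ℕ → Bool))) : Cardinal :=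
  sInf {c : Cardinal | ∃ X : Set (ℕ → Bool), X ∉ J ∧ c = #X}

/-- `cof(I, J)`: the least cardinality of a subfamily of `J` cofinal over `I`. -/
noncomputable def cofIJ (I J : Set (Set (ℕ → Bool))) : Cardinal :=
  sInf {c : Cardinal | ∃ A : Set (Set (ℕ → Bool)), A ⊆ J ∧
    (∀ B ∈ I, ∃ C ∈ A, B ⊆ C) ∧ c = #A}

/-- The dominating number 𝔡. -/
noncomputable def frakD : Cardinal :=
  sInf {c : Cardinal | ∃ F : Set (ℕ → ℕ),
    (∀ g : ℕ → ℕ, ∃ f ∈ F, ∀ᶠ n in atTop, g n ≤ f n) ∧ c = #F}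

/-- The unbounding number 𝔟. -/
noncomputable def frakB : Cardinal :=
  sInf {c : Cardinal | ∃ F : Set (ℕ → ℕ),
    (∀ g : ℕ → ℕ, ∃ f ∈ F, ¬ ∀ᶠ n in atTop, f n ≤ g n) ∧ c = #F}

theorem small_null_covered_by_Fsigma (μ : Measure (ℕ → Bool)) (hμ : IsFairCoin μ)
    (X : Set (ℕ → Bool)) (hX : ∃ G : Set (ℕ → Bool), μ G = 0 ∧ X ⊆ G)
    (hcard : #X < frakB) :
    ∃ G : Set (ℕ → Bool),
      (∃ F : ℕ → Set (ℕ → Bool), (∀ n, IsClosed (F n)) ∧ G = ⋃ n, F n) ∧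
      μ G = 0 ∧ X ⊆ G := by
  classical
  -- μ is a probability (hence finite) measure
  have huniv : μ Set.univ = 1 := by
    have h := hμ ∅ (fun _ => true)
    simpa using h
  haveI : IsFiniteMeasure μ := ⟨by rw [huniv]; exact ENNReal.one_lt_top⟩
  obtain ⟨G0, hG0, hXG0⟩ := hX
  have hXnull : μ X = 0 := measure_mono_null hXG0 hG0
  -- open sets of small measure containing X
  have hU : ∀ m : ℕ, ∃ U : Set (ℕ → Bool), X ⊆ U ∧ IsOpen U ∧ μ U < (1/2 : ENNReal)^m := by
    intro m
    have h1 : μ X < (1/2 : ENNReal)^m := by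
      rw [hXnull]
      exact ENNReal.pow_pos (ENNReal.div_pos one_ne_zero ENNReal.ofNat_ne_top) m
    obtain ⟨U, hXU, hUo, hUm⟩ := X.exists_isOpen_lt_of_lt _ h1
    exact ⟨U, hXU, hUo, hUm⟩
  choose U hXU hUo hUm using hU
  -- cylinders indexed by finite words
  let Cyl : (Σ n : ℕ, Fin n → Bool) → Set (ℕ → Bool) :=
    fun w => {x | ∀ i : Fin w.1, x i = w.2 i}
  have hCylClosed : ∀ w, IsClosed (Cyl w) := by
    intro w
    have h : Cyl w = ⋂ i : Fin w.1, {x : ℕ → Bool | x i = w.2 i} := by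
      ext x; simp [Cyl]
    rw [h]
    exact isClosed_iInter fun i =>
      isClosed_eq (continuous_apply (i : ℕ)) continuous_const
  -- cylinders form a basis
  have hbasis : ∀ (V : Set (ℕ → Bool)), IsOpen V → ∀ x ∈ V,
      ∃ n : ℕ, {y : ℕ → Bool | ∀ i < n, y i = x i} ⊆ V := by
    intro V hV x hx
    obtain ⟨I, u, hIu, hsub⟩ := isOpen_pi_iff.1 hV x hx
    refine ⟨(I.sup id) + 1, fun y hy => hsub ?_⟩
    intro i hi
    have hlt : i < (I.sup id) + 1 := Nat.lt_succ_of_le (Finset.le_sup (f := id) hi)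
    have : y i = x i := hy i hlt
    rw [this]
    exact (hIu i hi).2
  -- enumerate the words
  obtain ⟨e, he⟩ := exists_surjective_nat (Σ n : ℕ, Fin n → Bool)
  let D : ℕ → ℕ → Set (ℕ → Bool) := fun m k =>
    if Cyl (e k) ⊆ U m then Cyl (e k) else ∅
  have hDclosed : ∀ m k, IsClosed (D m k) := by
    intro m k
    by_cases h : Cyl (e k) ⊆ U m <;> simp [D, h, hCylClosed, isClosed_empty]
  have hDsub : ∀ m k, D m k ⊆ U m := by
    intro m k
    by_cases h : Cyl (e k) ⊆ U m <;> simp [D, h]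
  have hmemD : ∀ x ∈ X, ∀ m, ∃ k, x ∈ D m k := by
    intro x hx m
    obtain ⟨n, hn⟩ := hbasis (U m) (hUo m) x (hXU m hx)
    obtain ⟨k, hk⟩ := he ⟨n, fun i => x i⟩
    refine ⟨k, ?_⟩
    have hsub : Cyl (e k) ⊆ U m := by
      rw [hk]
      intro y hy
      exact hn fun i hi => hy ⟨i, hi⟩
    have hxmem : x ∈ Cyl (e k) := by
      rw [hk]; intro i; rfl
    simp only [D, if_pos hsub]
    exact hxmem
  -- pick the functions f x
  have hf' : ∀ x : X, ∀ m : ℕ, ∃ k, (x : ℕ → Bool) ∈ D m k :=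
    fun x m => hmemD x x.2 m
  choose f hfspec using hf'
  -- get a dominating function g
  have hg : ∃ g : ℕ → ℕ, ∀ x : X, ∀ᶠ m in atTop, f x m ≤ g m := by
    by_contra hcon
    push_neg at hcon
    have hmemB : frakB ≤ #(Set.range f) := by
      apply csInf_le'
      refine ⟨Set.range f, ?_, rfl⟩
      intro g'
      obtain ⟨x, hx⟩ := hcon g'
      exact ⟨f x, ⟨x, rfl⟩, Filter.not_eventually.2 (hx.mono fun n hn => not_le.2 hn)⟩
    have hle : #(Set.range f) ≤ #X := Cardinal.mk_range_le
    exact absurd hcard (not_lt.2 (hmemB.trans hle))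
  obtain ⟨g, hg⟩ := hg
  let Wm : ℕ → Set (ℕ → Bool) := fun m => ⋃ k ∈ Finset.range (g m + 1), D m k
  have hWclosed : ∀ m, IsClosed (Wm m) :=
    fun m => (Finset.range (g m + 1)).finite_toSet.isClosed_biUnion fun k _ => hDclosed m k
  have hWsub : ∀ m, Wm m ⊆ U m := by
    intro m x hx
    obtain ⟨k, _, hk⟩ := Set.mem_iUnion₂.1 hx
    exact hDsub m k hk
  let F : ℕ → Set (ℕ → Bool) := fun N => ⋂ m, ⋂ (_ : N ≤ m), Wm m
  have hFclosed : ∀ N, IsClosed (F N) :=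
    fun N => isClosed_iInter fun m => isClosed_iInter fun _ => hWclosed m
  have hFnull : ∀ N, μ (F N) = 0 := by
    intro N
    have hle : ∀ m ≥ N, μ (F N) ≤ (1/2 : ENNReal)^m := by
      intro m hm
      have hsub : F N ⊆ Wm m := fun x hx => by
        exact Set.mem_iInter.1 (Set.mem_iInter.1 hx m) hm
      exact ((measure_mono (hsub.trans (hWsub m))).trans (hUm m).le)
    have htend : Tendsto (fun m : ℕ => ((1 : ENNReal)/2)^m) atTop (nhds 0) :=
      ENNReal.tendsto_pow_atTop_nhds_zero_of_lt_one
        (by rw [ENNReal.div_lt_iff (by norm_num) (by norm_num)]; norm_num)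
    have h0 : μ (F N) ≤ 0 := ge_of_tendsto htend (eventually_atTop.2 ⟨N, hle⟩)
    exact le_antisymm h0 zero_le
  refine ⟨⋃ N, F N, ⟨F, hFclosed, rfl⟩, measure_iUnion_null hFnull, ?_⟩
  intro x hx
  obtain ⟨N, hN⟩ := eventually_atTop.1 (hg ⟨x, hx⟩)
  refine Set.mem_iUnion.2 ⟨N, Set.mem_iInter.2 fun m => Set.mem_iInter.2 fun hm => ?_⟩
  refine Set.mem_iUnion₂.2 ⟨f ⟨x, hx⟩ m, Finset.mem_range.2 (Nat.lt_succ_of_le (hN m hm)), ?_⟩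
  exact hfspec ⟨x, hx⟩ m
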